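/- Every left ideal of R^{t,f}_Θ has one of the following forms: (i) the trivial ideals ⟨0⟩ and ⟨1⟩; (ii) a nontrivial left ideal contained in ⟨u⟩, namely a sum R^{t,f}_Θ(u^{(t−1)−i_1}b_{i_1}(x) − u^{(t−1)−(i_1−1)}g_{i_1}(x)) + … + R^{t,f}_Θ(u^{(t−1)−i_n}b_{i_n}(x) − u^{(t−1)−(i_n−1)}g_{i_n}(x)), where 0 ≤ i_1 < i_2 < … < i_n ≤ t−2, each b_{i_j}(x) ∈ B_{f̄} with deg b_{i_j}(x) ≤ d−1, each g_{i_j}(x) ∈ R^{t,f}_Θ, and whenever u^{(t−1)−i_j}c(x) + u^{(t−1)−(i_j−1)}g(x) lies in the sum of the generators with indices i_k, …, i_n for some j < k, some c(x) ∈ F_{p^m}[x,θ]/⟨f̄(x)⟩ and g(x) ∈ R^{t,f}_Θ, then b_{i_j}(x) right-divides c(x); (iii) a nontrivial left ideal not contained in ⟨u⟩, of the form R^{t,f}_Θ(b(x) + ug(x)) + I, where b(x) ∈ B_{f̄} with deg b(x) ≤ d−1, g(x) ∈ R^{t,f}_Θ, and I is a left ideal as in (ii) satisfying the same right-divisibility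 condition. -/

import Mathlib

open Polynomial

namespace SkewPaper

variable (p m t : ℕ) [Fact p.Prime]

/-- The finite field `F_{p^m}`. -/
abbrev Fq : Type := GaloisField p m

/-- The finite chain ring `R^t = F_{p^m}[u]/⟨u^t⟩`. -/
abbrev Rt : Type :=
  Polynomial (Fq p m) ⧸ Ideal.span {(Polynomial.X : Polynomial (Fq p m)) ^ t}

/-- The element `u` of `R^t`. -/
noncomputable def uE : Rt p m t := Ideal.Quotient.mk _ Polynomial.X

/-- The canonical embedding `F_{p^m} → R^t`. -/
noncomputable def eps : Fq p m →+* Rt p m t :=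
  (Ideal.Quotient.mk _).comp Polynomial.C

/-- The automorphism `Θ` of `R^t` extending `θ` with `Θ(u) = u`,
i.e. `Θ(a₀ + a₁u + ⋯ + a_{t-1}u^{t-1}) = θ(a₀) + θ(a₁)u + ⋯ + θ(a_{t-1})u^{t-1}`. -/
noncomputable def Th (theta : Fq p m ≃+* Fq p m) : Rt p m t ≃+* Rt p m t :=
  Ideal.quotientEquiv _ _ (Polynomial.mapEquiv theta) (by
    rw [Ideal.map_span, Set.image_singleton]
    simp [Polynomial.mapEquiv_apply])

/-- Reduction of `R^t` modulo `u`. -/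
noncomputable def rdc (ht : 0 < t) : Rt p m t →+* Fq p m :=
  Ideal.Quotient.lift _ (Polynomial.evalRingHom 0) (by
    intro a ha
    rw [Ideal.mem_span_singleton] at ha
    obtain ⟨b, rfl⟩ := ha
    simp [zero_pow ht.ne'])

/-- `a` right-divides `b`, i.e. `b = h * a` for some `h`. -/
def RDvd {A : Type*} [Mul A] (a b : A) : Prop := ∃ h, b = h * a

/-- The element `Σᵢ ι(cᵢ) X^i` determined by a coefficient family `c`. -/
noncomputable def spoly {R A : Type*} [Semiring R] [Semiring A] (iot : R →+* A) (X : A)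
    (c : ℕ →₀ R) : A :=
  c.sum fun i a => iot a * X ^ i

/-- Lift `Σᵢ ι(ε(cᵢ)) X^i` of a skew polynomial over `F_{p^m}` to the skew polynomial ring
over `R^t` (coefficient-wise, via the embedding `F_{p^m} → R^t`). -/
noncomputable def liftP {A : Type*} [Semiring A] (iot : Rt p m t →+* A) (X : A)
    (c : ℕ →₀ Fq p m) : A :=
  c.sum fun i a => iot (eps p m t a) * X ^ i

/-- `λ = λ₀ + uλ₁ + ⋯ + u^{t-1}λ_{t-1}` as an element of `R^t`. -/
noncomputable def lamOf (lc : ℕ → Fq p m) : Rt p m t :=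
  ∑ i ∈ Finset.range t, eps p m t (lc i) * uE p m t ^ i

/-- The order `|Θ|` of `Θ` in the automorphism group of `R^t`. -/
noncomputable def thOrder (theta : Fq p m ≃+* Fq p m) : ℕ :=
  orderOf (G := RingAut (Rt p m t)) (Th p m t theta)

/-- The order `|θ|` of `θ` in the automorphism group of `F_{p^m}`. -/
noncomputable def thetaOrder (theta : Fq p m ≃+* Fq p m) : ℕ :=
  orderOf (G := RingAut (Fq p m)) theta

/-- The central polynomial `f(x) = Σᵢ fᵢ x^{i·|Θ|}` in the skew polynomial ring. -/
noncomputable def fOf {A : Type*} [Ring A] (theta : Fq p m ≃+* Fq p m)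
    (iot : Rt p m t →+* A) (X : A) (fc : ℕ →₀ Rt p m t) : A :=
  fc.sum fun i a => iot a * X ^ (i * thOrder p m t theta)

/-- The image of `u` in the quotient `R^{t,f}_Θ`. -/
noncomputable def uQ {P Q : Type*} [Semiring P] [Semiring Q] (iot : Rt p m t →+* P)
    (piQ : P →+* Q) : Q :=
  piQ (iot (uE p m t))

/-- The image in `R^{t,f}_Θ` of the lift of a skew polynomial over `F_{p^m}`. -/
noncomputable def lQ {P Q : Type*} [Semiring P] [Semiring Q] (iot : Rt p m t →+* P) (X : P)
    (piQ : P →+* Q) (c : ℕ →₀ Fq p m) : Q :=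
  piQ (liftP p m t iot X c)

/-- The class in `F_{p^m}[x,θ]/⟨f̄⟩` of the skew polynomial with coefficients `c`. -/
noncomputable def lQf {Pf Qf : Type*} [Semiring Pf] [Semiring Qf] (iotf : Fq p m →+* Pf)
    (Xf : Pf) (pif : Pf →+* Qf) (c : ℕ →₀ Fq p m) : Qf :=
  pif (spoly iotf Xf c)

/-- `b(x)` right-divides `c(x)` in the quotient `F_{p^m}[x,θ]/⟨f̄⟩`. -/
def RDvdC {Pf Qf : Type*} [Semiring Pf] [Semiring Qf] (iotf : Fq p m →+* Pf) (Xf : Pf)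
    (pif : Pf →+* Qf) (b c : ℕ →₀ Fq p m) : Prop :=
  ∃ h : Qf, lQf p m iotf Xf pif c = h * lQf p m iotf Xf pif b

/-- Membership in `B_w`: representative of degree `≤ D - 1` which right-divides `w`. -/
def InB {Pf : Type*} [Semiring Pf] (iotf : Fq p m →+* Pf) (Xf : Pf) (w : Pf) (D : ℕ)
    (c : ℕ →₀ Fq p m) : Prop :=
  (∀ i, D ≤ i → c i = 0) ∧ RDvd (spoly iotf Xf c) w

/-- `deg c < deg d` for coefficient families. -/
def degLt {R : Type*} [Zero R] (c d : ℕ →₀ R) : Prop := c.support.max < d.support.max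

/-- "Type (ii)" left ideals of `R^{t,f}_Θ`: those of the form
`Σⱼ R (u^{(t-1)-i_j} b_{i_j}(x) - u^{(t-1)-(i_j-1)} g_{i_j}(x))` with
`0 ≤ i₁ < ⋯ < i_n ≤ t-2`, `b_{i_j} ∈ B_w` of degree `≤ D - 1`, together with the
right-divisibility side condition. -/
def TypeTwo (p m t : ℕ) [Fact p.Prime] {P Pf Q Qf : Type*} [Ring P] [Ring Pf] [Ring Q] [Ring Qf]
    (iot : Rt p m t →+* P) (Xp : P) (piQ : P →+* Q)
    (iotf : Fq p m →+* Pf) (Xf : Pf) (pif : Pf →+* Qf)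
    (w : Pf) (D : ℕ) (J : Ideal Q) : Prop :=
  ∃ (n : ℕ) (idx : Fin n → ℕ) (bcs : Fin n → (ℕ →₀ Fq p m)) (gs : Fin n → Q),
    StrictMono idx ∧ (∀ j, idx j ≤ t - 2) ∧ (∀ j, InB p m iotf Xf w D (bcs j)) ∧
    J = Submodule.span Q (Set.range fun j : Fin n =>
        uQ p m t iot piQ ^ (t - 1 - idx j) * lQ p m t iot Xp piQ (bcs j)
          - uQ p m t iot piQ ^ (t - idx j) * gs j) ∧
    ∀ (j k : Fin n), j < k → ∀ (cc : ℕ →₀ Fq p m) (g : Q),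
      uQ p m t iot piQ ^ (t - 1 - idx j) * lQ p m t iot Xp piQ cc
          + uQ p m t iot piQ ^ (t - idx j) * g ∈
        Submodule.span Q ((fun l : Fin n =>
          uQ p m t iot piQ ^ (t - 1 - idx l) * lQ p m t iot Xp piQ (bcs l)
            - uQ p m t iot piQ ^ (t - idx l) * gs l) '' {l | k ≤ l}) →
      RDvdC p m iotf Xf pif (bcs j) cc


section Skew

variable {K A : Type*} [Ring K] [Ring A] (iot : K →+* A) (X : A)

lemma spoly_zero : spoly iot X 0 = 0 := Finsupp.sum_zero_index

lemma spoly_add (c c' : ℕ →₀ K) :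
    spoly iot X (c + c') = spoly iot X c + spoly iot X c' := by
  unfold spoly
  apply Finsupp.sum_add_index <;> intros <;> simp [add_mul]

/-- `spoly` as an additive monoid hom. -/
noncomputable def spolyHom : (ℕ →₀ K) →+ A where
  toFun := spoly iot X
  map_zero' := spoly_zero iot X
  map_add' := spoly_add iot X

lemma spoly_single (i : ℕ) (a : K) : spoly iot X (Finsupp.single i a) = iot a * X ^ i := by
  unfold spoly
  exact Finsupp.sum_single_index (by simp)

lemma spoly_sub (c c' : ℕ →₀ K) :
    spoly iot X (c - c') = spoly iot X c - spoly iot X c' :=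
  map_sub (spolyHom iot X) c c'

/-- the twisting embed: coefficient family of `iot a * X^k * spoly c`. -/
noncomputable def twF (σ : K →+* K) (a : K) (k : ℕ) (c : ℕ →₀ K) : ℕ →₀ K :=
  Finsupp.embDomain ⟨fun j => j + k, add_left_injective k⟩
    (c.mapRange (fun x => a * σ x) (by simp))

lemma twF_apply_le (σ : K →+* K) (a : K) (k : ℕ) (c : ℕ →₀ K) (j : ℕ) (h : k ≤ j) :
    twF σ a k c j = a * σ (c (j - k)) := by
  unfold twF
  have : j = (⟨fun j => j + k, add_left_injective k⟩ : ℕ ↪ ℕ) (j - k) := by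
    simp; omega
  rw [this, Finsupp.embDomain_apply]
  simp

lemma twF_apply_lt (σ : K →+* K) (a : K) (k : ℕ) (c : ℕ →₀ K) (j : ℕ) (h : j < k) :
    twF σ a k c j = 0 := by
  unfold twF
  apply Finsupp.embDomain_notin_range
  rintro ⟨i, rfl⟩
  simp at h

end Skew
section Skew2

variable {K A : Type*} [Ring K] [Ring A] (iot : K →+* A) (X : A)
  (σ : K ≃+* K)

lemma Xpow_mul (hX : ∀ a, X * iot a = iot (σ a) * X) (k : ℕ) (a : K) :
    X ^ k * iot a = iot ((σ ^ k) a) * X ^ k := by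
  induction k generalizing a with
  | zero =>
    simp
  | succ n ih =>
    rw [pow_succ, mul_assoc, hX, ← mul_assoc, ih (σ a), mul_assoc, ← pow_succ]
    congr 2

lemma mul_spoly (hX : ∀ a, X * iot a = iot (σ a) * X) (a : K) (k : ℕ) (c : ℕ →₀ K) :
    (iot a * X ^ k) * spoly iot X c = spoly iot X (twF (↑(σ ^ k) : K →+* K) a k c) := by
  classical
  unfold twF spoly
  rw [Finsupp.sum_embDomain]
  rw [Finsupp.sum_mapRange_index (by simp)]
  unfold Finsupp.sum
  rw [Finset.mul_sum]
  apply Finset.sum_congr rfl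
  intro i _
  simp only [Function.Embedding.coeFn_mk]
  rw [mul_assoc, ← mul_assoc (X ^ k), Xpow_mul iot X σ hX, map_mul, pow_add]
  push_cast
  rw [mul_assoc, mul_assoc, ← pow_add, ← pow_add, Nat.add_comm i k]

end Skew2
section Skew3
variable {K A : Type*} [Ring K] [Ring A] (iot : K →+* A) (X : A) (σ : K ≃+* K)

/-- convolution of coefficient families. -/
noncomputable def convF (c b : ℕ →₀ K) : ℕ →₀ K :=
  c.sum fun i a => twF (↑(σ ^ i) : K →+* K) a i b

lemma spoly_mul (hX : ∀ a, X * iot a = iot (σ a) * X) (c b : ℕ →₀ K) :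
    spoly iot X c * spoly iot X b = spoly iot X (convF σ c b) := by
  classical
  unfold convF
  rw [show spoly iot X (c.sum fun i a => twF (↑(σ ^ i) : K →+* K) a i b)
      = c.sum fun i a => spoly iot X (twF (↑(σ ^ i) : K →+* K) a i b) from
    map_finsuppSum (spolyHom iot X) c _]
  show (c.sum fun i a => iot a * X ^ i) * spoly iot X b = _
  unfold Finsupp.sum
  rw [Finset.sum_mul]
  apply Finset.sum_congr rfl
  intro i _
  exact mul_spoly iot X σ hX _ _ _

lemma convF_apply_bound (c b : ℕ →₀ K) (j : ℕ)
    (hc : ∀ i ∈ c.support, ∀ l ∈ b.support, i + l < j) : convF σ c b j = 0 := by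
  classical
  unfold convF
  rw [Finsupp.sum, Finsupp.finset_sum_apply]
  apply Finset.sum_eq_zero
  intro i hi
  by_cases h : i ≤ j
  · rw [twF_apply_le _ _ _ _ _ h]
    have : b (j - i) = 0 := by
      apply Finsupp.notMem_support_iff.mp
      intro hmem
      have := hc i hi (j - i) hmem
      omega
    rw [this]; simp
  · exact twF_apply_lt _ _ _ _ _ (by omega)

end Skew3
section SkewField
variable {K A : Type*} [Field K] [Ring A] (iot : K →+* A) (X : A) (σ : K ≃+* K)

lemma convF_apply_top (c b : ℕ →₀ K) (hc : c ≠ 0) (hb : b ≠ 0) :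
    convF σ c b ((c.support.max' (Finsupp.support_nonempty_iff.mpr hc)) +
      (b.support.max' (Finsupp.support_nonempty_iff.mpr hb)))
    = c (c.support.max' (Finsupp.support_nonempty_iff.mpr hc)) *
      (σ ^ (c.support.max' (Finsupp.support_nonempty_iff.mpr hc)))
        (b (b.support.max' (Finsupp.support_nonempty_iff.mpr hb))) := by
  classical
  set N := c.support.max' (Finsupp.support_nonempty_iff.mpr hc) with hN
  set M := b.support.max' (Finsupp.support_nonempty_iff.mpr hb) with hM
  unfold convF
  rw [Finsupp.sum, Finsupp.finset_sum_apply]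
  rw [Finset.sum_eq_single N]
  · rw [twF_apply_le _ _ _ _ _ (Nat.le_add_right N M)]
    have h' : N + M - N = M := by omega
    rw [h']
    rfl
  · intro i hi hne
    have hiN : i < N := lt_of_le_of_ne (Finset.le_max' _ _ hi) hne
    rw [twF_apply_le _ _ _ _ _ (by omega)]
    have : b (N + M - i) = 0 := by
      apply Finsupp.notMem_support_iff.mp
      intro hmem
      have := Finset.le_max' _ _ hmem
      omega
    rw [this]
    simp
  · intro hN'
    exact absurd (Finset.max'_mem _ _) hN'

/-- Euclidean division for the abstract skew polynomial ring over a field. -/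
lemma skew_div (hX : ∀ a, X * iot a = iot (σ a) * X) :
    ∀ (Nb : ℕ) (c : ℕ →₀ K), (∀ i, Nb ≤ i → c i = 0) →
    ∀ (b : ℕ →₀ K) (hb : b ≠ 0),
    ∃ (q : A) (r : ℕ →₀ K),
      spoly iot X c = q * spoly iot X b + spoly iot X r ∧
      ∀ i, b.support.max' (Finsupp.support_nonempty_iff.mpr hb) ≤ i → r i = 0 := by
  classical
  intro Nb
  induction Nb using Nat.strong_induction_on with
  | _ Nb ih =>
    intro c hc b hb
    set M := b.support.max' (Finsupp.support_nonempty_iff.mpr hb) with hM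
    by_cases hcl : ∀ i, M ≤ i → c i = 0
    · exact ⟨0, c, by simp, hcl⟩
    · push_neg at hcl
      have hc0 : c ≠ 0 := by
        rintro rfl
        obtain ⟨i, _, h2⟩ := hcl
        exact h2 rfl
      set n := c.support.max' (Finsupp.support_nonempty_iff.mpr hc0) with hn
      have hMn : M ≤ n := by
        obtain ⟨i, h1, h2⟩ := hcl
        exact le_trans h1 (Finset.le_max' _ _ (Finsupp.mem_support_iff.mpr h2))
      have hbM : b M ≠ 0 := Finsupp.mem_support_iff.mp (Finset.max'_mem _ _)
      have hnNb : n < Nb := by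
        by_contra h
        exact Finsupp.mem_support_iff.mp (Finset.max'_mem c.support _) (hc n (by omega))
      set a : K := c n * ((σ ^ (n - M)) (b M))⁻¹ with ha
      set c₂ : ℕ →₀ K := c - twF (↑(σ ^ (n - M)) : K →+* K) a (n - M) b with hc₂
      have hσ : (σ ^ (n - M)) (b M) ≠ 0 := by
        intro h
        exact hbM (by simpa only [RingEquiv.symm_apply_apply, map_zero] using congrArg (σ ^ (n - M)).symm h)
      have htop : (twF (↑(σ ^ (n - M)) : K →+* K) a (n - M) b) n = c n := by
        rw [twF_apply_le _ _ _ _ _ (by omega)]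
        have : n - (n - M) = M := by omega
        rw [this]
        show c n * ((σ ^ (n - M)) (b M))⁻¹ * (σ ^ (n - M)) (b M) = c n
        field_simp
      have hc₂sup : ∀ i, n ≤ i → c₂ i = 0 := by
        intro i hi
        rcases eq_or_lt_of_le hi with rfl | hlt
        · simp [hc₂, htop]
        · have h1 : c i = 0 := by
            apply Finsupp.notMem_support_iff.mp
            intro hmem
            have := Finset.le_max' c.support _ hmem
            omega
          have h2 : (twF (↑(σ ^ (n - M)) : K →+* K) a (n - M) b) i = 0 := by
            rw [twF_apply_le _ _ _ _ _ (by omega)]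
            have : b (i - (n - M)) = 0 := by
              apply Finsupp.notMem_support_iff.mp
              intro hmem
              have := Finset.le_max' b.support _ hmem
              omega
            rw [this]
            simp
          simp [hc₂, h1, h2]
      obtain ⟨q₂, r, hq₂, hr⟩ := ih n hnNb c₂ hc₂sup b hb
      refine ⟨q₂ + iot a * X ^ (n - M), r, ?_, hr⟩
      have : spoly iot X c₂ = spoly iot X c
          - (iot a * X ^ (n - M)) * spoly iot X b := by
        rw [hc₂, spoly_sub, mul_spoly iot X σ hX]
      rw [this] at hq₂
      rw [add_mul, sub_eq_iff_eq_add.mp hq₂]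
      abel
end SkewField
section IdealA
variable {K Pf Qf : Type*} [Field K] [Ring Pf] [Ring Qf]
  (iotf : K →+* Pf) (Xf : Pf) (σ : K ≃+* K)

lemma spoly_injective (hrep : ∀ g : Pf, ∃! c : ℕ →₀ K, g = spoly iotf Xf c)
    {c c' : ℕ →₀ K} (h : spoly iotf Xf c = spoly iotf Xf c') : c = c' := by
  obtain ⟨c₀, -, hu⟩ := hrep (spoly iotf Xf c')
  rw [hu c h.symm, hu c' rfl]

lemma idealA
    (hX : ∀ a, Xf * iotf a = iotf (σ a) * Xf)
    (hrep : ∀ g : Pf, ∃! c : ℕ →₀ K, g = spoly iotf Xf c)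
    (pif : Pf →+* Qf) (w : Pf) (hker : RingHom.ker pif = Ideal.span {w})
    (cw : ℕ →₀ K) (hw : w = spoly iotf Xf cw) (d : ℕ)
    (hdw : cw.support.max = (d : WithBot ℕ))
    (D : Ideal Qf) (hpif : ∀ x ∈ D, ∃ e, pif e = x) (hD : D ≠ ⊥) :
    ∃ bc : ℕ →₀ K, (∀ i, d ≤ i → bc i = 0) ∧
      (∃ h, w = h * spoly iotf Xf bc) ∧
      pif (spoly iotf Xf bc) ∈ D ∧
      ∀ cq ∈ D, ∃ η, cq = η * pif (spoly iotf Xf bc) := by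
  classical
  set E : Ideal Pf := Ideal.comap pif D with hE
  have hwE : w ∈ E := by
    have : pif w = 0 := by
      have : w ∈ RingHom.ker pif := by
        rw [hker]; exact Ideal.subset_span rfl
      simpa using this
    simp [hE, Ideal.mem_comap, this]
  have hw0 : w ≠ 0 := by
    intro h
    have : cw = 0 := spoly_injective iotf Xf hrep (by rw [← hw, h, spoly_zero])
    rw [this] at hdw
    simp at hdw
  -- minimal degree property
  set P : ℕ → Prop := fun n => ∃ c : ℕ →₀ K, c ≠ 0 ∧ spoly iotf Xf c ∈ E ∧
    ∀ i, n < i → c i = 0 with hP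
  have hPex : ∃ n, P n := by
    obtain ⟨x, hxD, hx0⟩ := Submodule.ne_bot_iff D |>.mp hD
    obtain ⟨e, he⟩ := hpif x hxD
    obtain ⟨c, hc, -⟩ := hrep e
    have hc0 : c ≠ 0 := by
      rintro rfl
      rw [spoly_zero] at hc
      rw [hc] at he
      simp at he
      exact hx0 he.symm
    refine ⟨c.support.max' (Finsupp.support_nonempty_iff.mpr hc0), c, hc0, ?_, ?_⟩
    · rw [← hc]; simpa [hE, Ideal.mem_comap, he] using hxD
    · intro i hi
      apply Finsupp.notMem_support_iff.mp
      intro hmem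
      exact absurd (Finset.le_max' _ _ hmem) (by omega)
  set n₀ := Nat.find hPex with hn₀
  obtain ⟨b, hb0, hbE, hbsup⟩ := Nat.find_spec hPex
  set Mb := b.support.max' (Finsupp.support_nonempty_iff.mpr hb0) with hMb
  have hMbn₀ : Mb ≤ n₀ := by
    by_contra h
    exact Finsupp.mem_support_iff.mp (Finset.max'_mem _ _) (hbsup Mb (by omega))
  -- minimality
  have hmin : ∀ c : ℕ →₀ K, spoly iotf Xf c ∈ E → (∀ i, Mb ≤ i → c i = 0) → c = 0 := by
    intro c hcE hcs
    by_contra hc0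
    set N := c.support.max' (Finsupp.support_nonempty_iff.mpr hc0) with hNd
    have hNMb : N < Mb := by
      have := Finsupp.mem_support_iff.mp (Finset.max'_mem c.support
        (Finsupp.support_nonempty_iff.mpr hc0))
      by_contra h
      exact this (hcs N (by omega))
    have : P N := ⟨c, hc0, hcE, fun i hi => by
      apply Finsupp.notMem_support_iff.mp
      intro hmem
      exact absurd (Finset.le_max' _ _ hmem) (by omega)⟩
    exact Nat.find_min hPex (by omega) this
  -- division: every element of E is a left multiple of spoly b
  have hdiv : ∀ e ∈ E, ∃ q, e = q * spoly iotf Xf b := by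
    intro e heE
    obtain ⟨c, hc, -⟩ := hrep e
    by_cases hc0 : c = 0
    · exact ⟨0, by rw [hc, hc0, spoly_zero, zero_mul]⟩
    obtain ⟨q, r, hqr, hr⟩ := skew_div iotf Xf σ hX
      (c.support.max' (Finsupp.support_nonempty_iff.mpr hc0) + 1) c
      (fun i hi => by
        apply Finsupp.notMem_support_iff.mp
        intro hmem
        exact absurd (Finset.le_max' _ _ hmem) (by omega)) b hb0
    have hrE : spoly iotf Xf r ∈ E := by
      have h1 : spoly iotf Xf r = e - q * spoly iotf Xf b := by
        rw [hc, hqr]; abel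
      rw [h1]
      exact Submodule.sub_mem E heE (Ideal.mul_mem_left E q hbE)
    have hr0 : r = 0 := hmin r hrE hr
    refine ⟨q, ?_⟩
    rw [hc, hqr, hr0, spoly_zero, add_zero]
  obtain ⟨qw, hqw⟩ := hdiv w hwE
  -- degree bound: Mb < d
  have hcwne : cw ≠ 0 := by
    intro h
    rw [h] at hdw
    simp at hdw
  have hcwmax : cw.support.max' (Finsupp.support_nonempty_iff.mpr hcwne) = d := by
    have := Finset.coe_max' (Finsupp.support_nonempty_iff.mpr hcwne)
    rw [hdw] at this
    exact WithBot.coe_eq_coe.mp this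
  have hMbd : Mb < d := by
    by_contra hge
    push_neg at hge
    -- then D = ⊥, contradiction
    obtain ⟨cq, hcq, -⟩ := hrep qw
    have hcq0 : cq ≠ 0 := by
      rintro rfl
      rw [spoly_zero] at hcq
      rw [hcq, zero_mul] at hqw
      exact hw0 hqw
    have hwconv : cw = convF σ cq b := by
      apply spoly_injective iotf Xf hrep
      rw [← hw, ← spoly_mul iotf Xf σ hX, ← hcq, hqw]
    set N := cq.support.max' (Finsupp.support_nonempty_iff.mpr hcq0) with hNd
    have htopne : convF σ cq b (N + Mb) ≠ 0 := by
      rw [convF_apply_top σ cq b hcq0 hb0]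
      apply mul_ne_zero
      · exact Finsupp.mem_support_iff.mp (Finset.max'_mem _ _)
      · intro h
        exact Finsupp.mem_support_iff.mp (Finset.max'_mem b.support _)
          ((map_eq_zero_iff _ (σ ^ N).injective).mp h)
    have hNMb_le : N + Mb ≤ d := by
      have : N + Mb ∈ cw.support := by
        rw [hwconv]
        exact Finsupp.mem_support_iff.mpr htopne
      have := Finset.le_max' _ _ this
      omega
    have hN0 : N = 0 := by omega
    have hMbd' : Mb = d := by omega
    -- qw is a nonzero constant
    have hcqconst : cq = Finsupp.single 0 (cq 0) := by
      ext i
      rcases Nat.eq_zero_or_pos i with rfl | hi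
      · simp
      · rw [Finsupp.single_apply_eq_zero.mpr (by omega)]
        apply Finsupp.notMem_support_iff.mp
        intro hmem
        have := Finset.le_max' _ _ hmem
        omega
    have hcq00 : cq 0 ≠ 0 := by
      intro h
      apply hcq0
      rw [hcqconst, h, Finsupp.single_zero]
    have hqwc : qw = iotf (cq 0) := by
      rw [hcq, hcqconst, spoly_single, pow_zero, mul_one]
      simp
    have hbw : spoly iotf Xf b = iotf (cq 0)⁻¹ * w := by
      rw [hqw, hqwc, ← mul_assoc, ← map_mul, inv_mul_cancel₀ hcq00, map_one, one_mul]
    have hbker : pif (spoly iotf Xf b) = 0 := by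
      have hpw : pif w = 0 := by
        have : w ∈ RingHom.ker pif := by rw [hker]; exact Ideal.subset_span rfl
        simpa using this
      rw [hbw, map_mul, hpw, mul_zero]
    have : D = ⊥ := by
      rw [Submodule.eq_bot_iff]
      intro x hxD
      obtain ⟨e, he⟩ := hpif x hxD
      have heE : e ∈ E := by simpa [hE, Ideal.mem_comap, he] using hxD
      obtain ⟨q, hq⟩ := hdiv e heE
      rw [← he, hq, map_mul, hbker, mul_zero]
    exact hD this
  refine ⟨b, ?_, ⟨qw, hqw⟩, ?_, ?_⟩
  · intro i hi
    apply Finsupp.notMem_support_iff.mp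
    intro hmem
    have := Finset.le_max' _ _ hmem
    omega
  · simpa [hE, Ideal.mem_comap] using hbE
  · intro cq hcqD
    obtain ⟨e, he⟩ := hpif cq hcqD
    have heE : e ∈ E := by simpa [hE, Ideal.mem_comap, he] using hcqD
    obtain ⟨q, hq⟩ := hdiv e heE
    exact ⟨pif q, by rw [← he, hq, map_mul]⟩

end IdealA

variable {p m t : ℕ} [Fact p.Prime]

lemma rdc_eps (ht : 0 < t) (a : Fq p m) : rdc p m t ht (eps p m t a) = a := by
  simp [rdc, eps]

lemma rdc_uE (ht : 0 < t) : rdc p m t ht (uE p m t) = 0 := by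
  simp [rdc, uE]

lemma uE_pow_t : uE p m t ^ t = 0 := by
  rw [uE, ← map_pow, Ideal.Quotient.eq_zero_iff_mem]
  exact Ideal.subset_span rfl

lemma Th_uE (theta : Fq p m ≃+* Fq p m) : Th p m t theta (uE p m t) = uE p m t := by
  simp [Th, uE, Ideal.quotientEquiv_mk]

lemma Th_pow_uE (theta : Fq p m ≃+* Fq p m) (k : ℕ) :
    ((Th p m t theta) ^ k) (uE p m t) = uE p m t := by
  induction k with
  | zero => rfl
  | succ n ih =>
    rw [pow_succ]
    show ((Th p m t theta) ^ n) (Th p m t theta (uE p m t)) = _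
    rw [Th_uE, ih]

lemma rdc_zero_exists (ht : 0 < t) (r : Rt p m t) (h : rdc p m t ht r = 0) :
    ∃ r', r = uE p m t * r' := by
  obtain ⟨g, rfl⟩ := Ideal.Quotient.mk_surjective r
  have hg : g.eval 0 = 0 := by simpa [rdc] using h
  have : Polynomial.X ∣ g := Polynomial.X_dvd_iff.mpr (by
    rwa [Polynomial.coeff_zero_eq_eval_zero])
  obtain ⟨g', rfl⟩ := this
  exact ⟨Ideal.Quotient.mk _ g', by rw [uE, ← map_mul]⟩

/-- Classification of the left ideals of `R^{t,f}_Θ`. -/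
theorem statement3 (p m t : ℕ) [Fact p.Prime] (hm : 0 < m) (ht : 0 < t)
    (theta : Fq p m ≃+* Fq p m)
    {P : Type*} [Ring P] (iot : Rt p m t →+* P) (Xp : P)
    (hXiot : ∀ r, Xp * iot r = iot (Th p m t theta r) * Xp)
    (hPrep : ∀ g : P, ∃! c : ℕ →₀ Rt p m t, g = spoly iot Xp c)
    {Pf : Type*} [Ring Pf] (iotf : Fq p m →+* Pf) (Xf : Pf)
    (hXiotf : ∀ a, Xf * iotf a = iotf (theta a) * Xf)
    (hPfrep : ∀ g : Pf, ∃! c : ℕ →₀ Fq p m, g = spoly iotf Xf c)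
    (fc : ℕ →₀ Rt p m t) (hfc : ∀ i, Th p m t theta (fc i) = fc i)
    (nu : P →+* Pf) (hnu1 : ∀ r, nu (iot r) = iotf (rdc p m t ht r)) (hnu2 : nu Xp = Xf)
    {Q : Type*} [Ring Q] (piQ : P →+* Q) (hpiQ : Function.Surjective piQ)
    (hkerQ : RingHom.ker piQ = Ideal.span {fOf p m t theta iot Xp fc})
    {Qf : Type*} [Ring Qf] (pif : Pf →+* Qf) (hpif : Function.Surjective pif)
    (hkerf : RingHom.ker pif = Ideal.span {nu (fOf p m t theta iot Xp fc)})
    (d : ℕ)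
    (hd : ∃ c : ℕ →₀ Fq p m, nu (fOf p m t theta iot Xp fc) = spoly iotf Xf c ∧ c.support.max = (d : WithBot ℕ)) :
    ∀ J : Ideal Q,
      J = ⊥ ∨ J = ⊤ ∨
      (J ≠ ⊥ ∧ J ≤ Ideal.span {uQ p m t iot piQ} ∧
        TypeTwo p m t iot Xp piQ iotf Xf pif (nu (fOf p m t theta iot Xp fc)) d J) ∨
      (J ≠ ⊤ ∧ ¬J ≤ Ideal.span {uQ p m t iot piQ} ∧
        ∃ (bc : ℕ →₀ Fq p m) (g : Q) (I : Ideal Q),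
          InB p m iotf Xf (nu (fOf p m t theta iot Xp fc)) d bc ∧
          TypeTwo p m t iot Xp piQ iotf Xf pif (nu (fOf p m t theta iot Xp fc)) d I ∧
          J = Submodule.span Q {lQ p m t iot Xp piQ bc + uQ p m t iot piQ * g} ⊔ I) := by
  classical
  intro J
  obtain ⟨cw, hw, hdw⟩ := hd
  set w : Pf := nu (fOf p m t theta iot Xp fc) with hwdef
  set U : Q := uQ p m t iot piQ with hUdef
  -- `u` is central in `P`
  have hThpow : ∀ k : ℕ, ((Th p m t theta) ^ k) (uE p m t) = uE p m t := Th_pow_uE theta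
  have hcentralP : ∀ g : P, iot (uE p m t) * g = g * iot (uE p m t) := by
    intro g
    obtain ⟨c, hc, -⟩ := hPrep g
    rw [hc]
    unfold spoly Finsupp.sum
    rw [Finset.mul_sum, Finset.sum_mul]
    apply Finset.sum_congr rfl
    intro i _
    rw [mul_assoc, Xpow_mul iot Xp (Th p m t theta) hXiot, hThpow, ← mul_assoc,
      ← mul_assoc, ← map_mul, ← map_mul, mul_comm (uE p m t)]
  have hUc : ∀ q : Q, U * q = q * U := by
    intro q
    obtain ⟨pq, rfl⟩ := hpiQ q
    show piQ (iot (uE p m t)) * piQ pq = piQ pq * piQ (iot (uE p m t))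
    rw [← map_mul, ← map_mul, hcentralP]
  have hUpow : ∀ (k : ℕ) (q : Q), U ^ k * q = q * U ^ k := by
    intro k q
    exact ((Commute.pow_left (hUc q) k)).eq
  have hUt : U ^ t = 0 := by
    show (piQ (iot (uE p m t))) ^ t = 0
    rw [← map_pow, ← map_pow, uE_pow_t, map_zero, map_zero]
  have hfker : piQ (fOf p m t theta iot Xp fc) = 0 := by
    have : fOf p m t theta iot Xp fc ∈ RingHom.ker piQ := by
      rw [hkerQ]; exact Ideal.subset_span rfl
    simpa using this
  have hfkerf : pif w = 0 := by
    have : w ∈ RingHom.ker pif := by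
      rw [hkerf]; exact Ideal.subset_span rfl
    simpa using this
  -- the reduction map `rho : Q → Qf`
  set rho : Q → Qf := fun q => pif (nu (Function.surjInv hpiQ q)) with hrhodef
  have hrho_wd : ∀ p1 p2 : P, piQ p1 = piQ p2 → pif (nu p1) = pif (nu p2) := by
    intro p1 p2 h
    have hmem : p1 - p2 ∈ RingHom.ker piQ := by
      rw [RingHom.mem_ker, map_sub, h, sub_self]
    rw [hkerQ] at hmem
    obtain ⟨hq, hhq⟩ := Submodule.mem_span_singleton.mp hmem
    have : pif (nu p1) - pif (nu p2) = 0 := by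
      rw [← map_sub, ← map_sub, ← hhq, smul_eq_mul, map_mul, map_mul, hfkerf, mul_zero]
    exact sub_eq_zero.mp this
  have hrho_piQ : ∀ pp : P, rho (piQ pp) = pif (nu pp) := by
    intro pp
    exact hrho_wd _ _ (Function.surjInv_eq hpiQ (piQ pp))
  have hrho_add : ∀ q1 q2, rho (q1 + q2) = rho q1 + rho q2 := by
    intro q1 q2
    obtain ⟨p1, rfl⟩ := hpiQ q1
    obtain ⟨p2, rfl⟩ := hpiQ q2
    rw [← map_add, hrho_piQ, hrho_piQ, hrho_piQ, map_add, map_add]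
  have hrho_sub : ∀ q1 q2, rho (q1 - q2) = rho q1 - rho q2 := by
    intro q1 q2
    obtain ⟨p1, rfl⟩ := hpiQ q1
    obtain ⟨p2, rfl⟩ := hpiQ q2
    rw [← map_sub, hrho_piQ, hrho_piQ, hrho_piQ, map_sub, map_sub]
  have hrho_mul : ∀ q1 q2, rho (q1 * q2) = rho q1 * rho q2 := by
    intro q1 q2
    obtain ⟨p1, rfl⟩ := hpiQ q1
    obtain ⟨p2, rfl⟩ := hpiQ q2
    rw [← map_mul, hrho_piQ, hrho_piQ, hrho_piQ, map_mul, map_mul]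
  have hrho_zero : rho 0 = 0 := by
    have := hrho_piQ 0
    simpa using this
  have hrho_u : rho U = 0 := by
    show rho (piQ (iot (uE p m t))) = 0
    rw [hrho_piQ, hnu1, rdc_uE, map_zero, map_zero]
  have hnu_liftP : ∀ c : ℕ →₀ Fq p m, nu (liftP p m t iot Xp c) = spoly iotf Xf c := by
    intro c
    unfold liftP spoly Finsupp.sum
    rw [map_sum]
    apply Finset.sum_congr rfl
    intro i _
    rw [map_mul, map_pow, hnu1, hnu2, rdc_eps]
  have hrho_lQ : ∀ c : ℕ →₀ Fq p m,
      rho (lQ p m t iot Xp piQ c) = lQf p m iotf Xf pif c := by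
    intro c
    show rho (piQ (liftP p m t iot Xp c)) = pif (spoly iotf Xf c)
    rw [hrho_piQ, hnu_liftP]
  have hrho_surj : ∀ η : Qf, ∃ q, rho q = η := by
    intro η
    obtain ⟨h, rfl⟩ := hpif η
    obtain ⟨ch, hch, -⟩ := hPfrep h
    exact ⟨piQ (liftP p m t iot Xp ch), by rw [hrho_piQ, hnu_liftP, ← hch]⟩
  have hnu_spoly : ∀ c : ℕ →₀ Rt p m t,
      nu (spoly iot Xp c) = spoly iotf Xf (c.mapRange (rdc p m t ht) (map_zero _)) := by
    intro c
    unfold spoly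
    rw [Finsupp.sum_mapRange_index (by simp)]
    unfold Finsupp.sum
    rw [map_sum]
    apply Finset.sum_congr rfl
    intro i _
    rw [map_mul, map_pow, hnu1, hnu2]
  have hnu_surj : ∀ h : Pf, ∃ pp, nu pp = h := by
    intro h
    obtain ⟨ch, hch, -⟩ := hPfrep h
    exact ⟨liftP p m t iot Xp ch, by rw [hnu_liftP, ← hch]⟩
  -- kernel of nu
  have hkernu : ∀ pp : P, nu pp = 0 → ∃ z, pp = iot (uE p m t) * z := by
    intro pp hpp
    obtain ⟨c, hc, -⟩ := hPrep pp
    have hz : c.mapRange (rdc p m t ht) (map_zero _) = 0 := by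
      apply spoly_injective iotf Xf hPfrep
      rw [← hnu_spoly, ← hc, hpp, spoly_zero]
    have hrc : ∀ i, rdc p m t ht (c i) = 0 := by
      intro i
      have := congrArg (fun v : ℕ →₀ Fq p m => v i) hz
      simpa [Finsupp.mapRange_apply] using this
    set wit : Rt p m t → Rt p m t := fun v =>
      if v = 0 then 0 else
        (if hv : ∃ r', v = uE p m t * r' then hv.choose else 0) with hwit
    have hwit0 : wit 0 = 0 := by
      rw [hwit]
      simp
    have hwitspec : ∀ v : Rt p m t, rdc p m t ht v = 0 → uE p m t * wit v = v := by
      intro v hv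
      by_cases h0 : v = 0
      · rw [hwit, h0]
        simp
      · have hex : ∃ r', v = uE p m t * r' := rdc_zero_exists ht v hv
        rw [hwit]
        simp only [if_neg h0, dif_pos hex]
        exact hex.choose_spec.symm
    refine ⟨spoly iot Xp (c.mapRange wit hwit0), ?_⟩
    rw [hc]
    unfold spoly
    rw [Finsupp.sum_mapRange_index (by simp)]
    unfold Finsupp.sum
    rw [Finset.mul_sum]
    apply Finset.sum_congr rfl
    intro i _
    rw [← mul_assoc, ← map_mul, hwitspec (c i) (hrc i)]
  -- kernel of rho
  have hkerrho : ∀ q : Q, rho q = 0 → ∃ z, q = z * U := by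
    intro q hq0
    obtain ⟨pq, rfl⟩ := hpiQ q
    rw [hrho_piQ] at hq0
    have hmem : nu pq ∈ RingHom.ker pif := by rwa [RingHom.mem_ker]
    rw [hkerf] at hmem
    obtain ⟨h, hh⟩ := Submodule.mem_span_singleton.mp hmem
    obtain ⟨ph, hph⟩ := hnu_surj h
    have h2 : nu (pq - ph * fOf p m t theta iot Xp fc) = 0 := by
      rw [map_sub, map_mul, hph, ← hwdef, ← hh, smul_eq_mul, sub_self]
    obtain ⟨z, hz⟩ := hkernu _ h2
    refine ⟨piQ z, ?_⟩
    have h3 : pq = ph * fOf p m t theta iot Xp fc + iot (uE p m t) * z := by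
      rw [← hz]
      abel
    rw [h3, map_add, map_mul, hfker, mul_zero, zero_add, map_mul]
    show piQ (iot (uE p m t)) * piQ z = piQ z * U
    rw [show piQ (iot (uE p m t)) = U from rfl, hUc]
  -- the tower of ideals in Qf
  set Dset : ℕ → Ideal Qf := fun i =>
    Submodule.span Qf (rho '' {y : Q | U ^ (t - 1 - i) * y ∈ J}) with hDsetdef
  have hDmem : ∀ (i : ℕ) (x : Qf),
      x ∈ Dset i ↔ ∃ y, U ^ (t - 1 - i) * y ∈ J ∧ rho y = x := by
    intro i x
    constructor
    · intro hx
      rw [hDsetdef] at hx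
      induction hx using Submodule.span_induction with
      | mem x hxs =>
        obtain ⟨y, hy, rfl⟩ := hxs
        exact ⟨y, hy, rfl⟩
      | zero => exact ⟨0, by rw [mul_zero]; exact J.zero_mem, hrho_zero⟩
      | add x y hx hy ihx ihy =>
        obtain ⟨y1, hy1, hr1⟩ := ihx
        obtain ⟨y2, hy2, hr2⟩ := ihy
        exact ⟨y1 + y2, by rw [mul_add]; exact J.add_mem hy1 hy2,
          by rw [hrho_add, hr1, hr2]⟩
      | smul a x hx ihx =>
        obtain ⟨y, hy, hr⟩ := ihx
        obtain ⟨qa, hqa⟩ := hrho_surj a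
        refine ⟨qa * y, ?_, by rw [hrho_mul, hqa, hr]; rfl⟩
        rw [← mul_assoc, hUpow, mul_assoc]
        exact J.mul_mem_left qa hy
    · rintro ⟨y, h1, h2⟩
      exact Submodule.subset_span ⟨y, h1, h2⟩
  -- choose generators levelwise
  have hlevel : ∀ i : ℕ, ∃ (bc : ℕ →₀ Fq p m) (g : Q), i < t → Dset i ≠ ⊥ →
      (InB p m iotf Xf w d bc ∧
       (U ^ (t - 1 - i) * lQ p m t iot Xp piQ bc - U ^ (t - i) * g ∈ J) ∧
       ∀ x ∈ Dset i, ∃ η, x = η * lQf p m iotf Xf pif bc) := by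
    intro i
    by_cases h1 : i < t
    · by_cases h2 : Dset i = ⊥
      · exact ⟨0, 0, fun _ hne => absurd h2 hne⟩
      · obtain ⟨bc, hbc1, hbc2, hbc3, hbc4⟩ := idealA iotf Xf theta hXiotf hPfrep pif w
          hkerf cw hw d hdw (Dset i) (fun x _ => hpif x) h2
        obtain ⟨y, hyJ, hyr⟩ := (hDmem i _).mp hbc3
        have h3 : rho (y - lQ p m t iot Xp piQ bc) = 0 := by
          rw [hrho_sub, hrho_lQ, hyr]
          show pif (spoly iotf Xf bc) - pif (spoly iotf Xf bc) = 0
          rw [sub_self]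
        obtain ⟨z, hz⟩ := hkerrho _ h3
        refine ⟨bc, -z, fun hit _ => ⟨⟨hbc1, hbc2⟩, ?_, fun x hx => hbc4 x hx⟩⟩
        have hy : y = lQ p m t iot Xp piQ bc + z * U := by
          rw [← hz]
          abel
        have h4 : U ^ (t - 1 - i) * lQ p m t iot Xp piQ bc - U ^ (t - i) * (-z)
            = U ^ (t - 1 - i) * y := by
          have hexp : t - i = t - 1 - i + 1 := by omega
          rw [hy, hexp, mul_add, mul_neg, sub_neg_eq_add, ← hUc z, ← mul_assoc, ← pow_succ]
        rw [h4]
        exact hyJ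
    · exact ⟨0, 0, fun h => absurd h h1⟩
  choose bfun gfun hmain using hlevel
  set Wg : ℕ → Q := fun i =>
    U ^ (t - 1 - i) * lQ p m t iot Xp piQ (bfun i) - U ^ (t - i) * gfun i with hWgdef
  have hWJ : ∀ i, i < t → Dset i ≠ ⊥ → Wg i ∈ J := fun i h1 h2 => (hmain i h1 h2).2.1
  have hrhoY : ∀ i, rho (lQ p m t iot Xp piQ (bfun i) - U * gfun i)
      = lQf p m iotf Xf pif (bfun i) := by
    intro i
    rw [hrho_sub, hrho_lQ, hrho_mul, hrho_u, zero_mul, sub_zero]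
  have hYW : ∀ i, i < t →
      U ^ (t - 1 - i) * (lQ p m t iot Xp piQ (bfun i) - U * gfun i) = Wg i := by
    intro i hi
    rw [hWgdef]
    simp only [mul_sub]
    congr 1
    rw [← mul_assoc, ← pow_succ]
    congr 2
    omega
  set Fs : Finset ℕ := (Finset.range t).filter (fun i => Dset i ≠ ⊥) with hFsdef
  have hFsmem : ∀ i, i ∈ Fs ↔ (i < t ∧ Dset i ≠ ⊥) := by
    intro i
    rw [hFsdef, Finset.mem_filter, Finset.mem_range]
  -- J is spanned by the Wg over Fs
  have hind : ∀ k, k ≤ t → ∀ a y, a ∈ J → a = U ^ (t - k) * y →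
      a ∈ Submodule.span Q (Wg '' ↑Fs) := by
    intro k
    induction k with
    | zero =>
      intro _ a y haJ ha
      rw [Nat.sub_zero, hUt, zero_mul] at ha
      rw [ha]
      exact Submodule.zero_mem _
    | succ n ihn =>
      intro hkt a y haJ ha
      have hs : t - (n + 1) = t - 1 - n := by omega
      have hyD : rho y ∈ Dset n := (hDmem n (rho y)).mpr ⟨y, by rw [← hs, ← ha]; exact haJ, rfl⟩
      by_cases hD : Dset n = ⊥
      · rw [hD, Submodule.mem_bot] at hyD
        obtain ⟨z, hz⟩ := hkerrho y hyD
        have ha2 : a = U ^ (t - n) * z := by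
          rw [ha, hz, ← hUc z, ← mul_assoc, ← pow_succ]
          congr 2
          omega
        exact ihn (by omega) a z haJ ha2
      · have hn_t : n < t := by omega
        obtain ⟨hInB, hWJn, hdivD⟩ := hmain n hn_t hD
        obtain ⟨η, hη⟩ := hdivD (rho y) hyD
        obtain ⟨hq, hhq⟩ := hrho_surj η
        have h1 : rho (y - hq * (lQ p m t iot Xp piQ (bfun n) - U * gfun n)) = 0 := by
          rw [hrho_sub, hrho_mul, hhq, hrhoY n, ← hη, sub_self]
        obtain ⟨z, hz⟩ := hkerrho _ h1
        have ha' : a - hq * Wg n = U ^ (t - n) * z := by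
          rw [ha, hs, ← hYW n hn_t, ← mul_assoc, ← hUpow (t - 1 - n) hq, mul_assoc,
            ← mul_sub, hz, ← hUc z, ← mul_assoc, ← pow_succ]
          congr 2
          omega
        have haJ' : a - hq * Wg n ∈ J := J.sub_mem haJ (J.mul_mem_left hq (hWJ n hn_t hD))
        have hmem1 := ihn (by omega) _ z haJ' ha'
        have hWmem : Wg n ∈ Submodule.span Q (Wg '' ↑Fs) :=
          Submodule.subset_span ⟨n, by rw [Finset.mem_coe, hFsmem]; exact ⟨hn_t, hD⟩, rfl⟩
        have ha3 : a = (a - hq * Wg n) + hq * Wg n := by abel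
        rw [ha3]
        exact Submodule.add_mem _ hmem1 (Submodule.smul_mem _ hq hWmem)
  have hJM : J = Submodule.span Q (Wg '' ↑Fs) := by
    apply le_antisymm
    · intro a haJ
      exact hind t le_rfl a a haJ (by rw [Nat.sub_self, pow_zero, one_mul])
    · rw [Submodule.span_le]
      rintro x ⟨i, hi, rfl⟩
      rw [Finset.mem_coe, hFsmem] at hi
      exact hWJ i hi.1 hi.2
  -- the TypeTwo construction for suitable finsets of levels
  have hTT : ∀ G : Finset ℕ, (∀ i ∈ G, i < t ∧ Dset i ≠ ⊥ ∧ i ≤ t - 2) →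
      TypeTwo p m t iot Xp piQ iotf Xf pif w d (Submodule.span Q (Wg '' ↑G)) := by
    intro G hG
    have hrange : Set.range (fun j : Fin G.card => ((G.orderIsoOfFin rfl j : ℕ))) = ↑G := by
      ext x
      constructor
      · rintro ⟨j, rfl⟩
        exact (G.orderIsoOfFin rfl j).2
      · intro hx
        exact ⟨(G.orderIsoOfFin rfl).symm ⟨x, hx⟩, by simp⟩
    refine ⟨G.card, fun j => ((G.orderIsoOfFin rfl j : ℕ)),
      fun j => bfun ((G.orderIsoOfFin rfl j : ℕ)), fun j => gfun ((G.orderIsoOfFin rfl j : ℕ)),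
      ?_, ?_, ?_, ?_, ?_⟩
    · intro a b hab
      exact Subtype.coe_lt_coe.mpr ((G.orderIsoOfFin rfl).strictMono hab)
    · intro j
      exact (hG _ (G.orderIsoOfFin rfl j).2).2.2
    · intro j
      obtain ⟨h1, h2, h3⟩ := hG _ (G.orderIsoOfFin rfl j).2
      exact (hmain _ h1 h2).1
    · show Submodule.span Q (Wg '' ↑G)
        = Submodule.span Q (Set.range fun j : Fin G.card => Wg ((G.orderIsoOfFin rfl j : ℕ)))
      rw [show (fun j : Fin G.card => Wg ((G.orderIsoOfFin rfl j : ℕ)))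
          = Wg ∘ (fun j : Fin G.card => ((G.orderIsoOfFin rfl j : ℕ))) from rfl,
        Set.range_comp, hrange]
    · intro j k hjk cc g hmem
      set i : ℕ := ((G.orderIsoOfFin rfl j : ℕ)) with hidef
      obtain ⟨hi1, hi2, hi3⟩ := hG _ (G.orderIsoOfFin rfl j).2
      have hsple : Submodule.span Q ((fun l : Fin G.card =>
          U ^ (t - 1 - ((G.orderIsoOfFin rfl l : ℕ))) *
            lQ p m t iot Xp piQ (bfun ((G.orderIsoOfFin rfl l : ℕ)))
          - U ^ (t - ((G.orderIsoOfFin rfl l : ℕ))) * gfun ((G.orderIsoOfFin rfl l : ℕ)))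
            '' {l | k ≤ l}) ≤ J := by
        rw [Submodule.span_le]
        rintro x ⟨l, -, rfl⟩
        obtain ⟨hl1, hl2, -⟩ := hG _ (G.orderIsoOfFin rfl l).2
        exact hWJ _ hl1 hl2
      have hXJ : U ^ (t - 1 - i) * lQ p m t iot Xp piQ cc + U ^ (t - i) * g ∈ J :=
        hsple hmem
      have hexp : t - i = t - 1 - i + 1 := by omega
      have hfac : U ^ (t - 1 - i) * (lQ p m t iot Xp piQ cc + U * g)
          = U ^ (t - 1 - i) * lQ p m t iot Xp piQ cc + U ^ (t - i) * g := by
        rw [mul_add, hexp, ← mul_assoc, ← pow_succ]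
      have hrhocc : rho (lQ p m t iot Xp piQ cc + U * g) = lQf p m iotf Xf pif cc := by
        rw [hrho_add, hrho_lQ, hrho_mul, hrho_u, zero_mul, add_zero]
      have hccD : lQf p m iotf Xf pif cc ∈ Dset i :=
        (hDmem i _).mpr ⟨lQ p m t iot Xp piQ cc + U * g, by rw [hfac]; exact hXJ, hrhocc⟩
      exact (hmain i hi1 hi2).2.2 _ hccD
  have hUspan : ∀ q : Q, q ∈ Ideal.span {U} ↔ ∃ z : Q, q = z * U := by
    intro q
    rw [Ideal.span, Submodule.mem_span_singleton]
    constructor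
    · rintro ⟨z, rfl⟩
      exact ⟨z, rfl⟩
    · rintro ⟨z, rfl⟩
      exact ⟨z, rfl⟩
  by_cases hJbot : J = ⊥
  · exact Or.inl hJbot
  by_cases hJtop : J = ⊤
  · exact Or.inr (Or.inl hJtop)
  by_cases hJu : J ≤ Ideal.span {U}
  · -- case (ii)
    refine Or.inr (Or.inr (Or.inl ⟨hJbot, hJu, ?_⟩))
    have hDt1 : Dset (t - 1) = ⊥ := by
      rw [Submodule.eq_bot_iff]
      intro x hx
      obtain ⟨y, hyJ, rfl⟩ := (hDmem (t - 1) x).mp hx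
      have hyJ' : y ∈ J := by
        have h0 : t - 1 - (t - 1) = 0 := by omega
        rwa [h0, pow_zero, one_mul] at hyJ
      obtain ⟨z, hz⟩ := hUspan y |>.mp (hJu hyJ')
      rw [hz, hrho_mul, hrho_u, mul_zero]
    have hGood : ∀ i ∈ Fs, i < t ∧ Dset i ≠ ⊥ ∧ i ≤ t - 2 := by
      intro i hi
      rw [hFsmem] at hi
      refine ⟨hi.1, hi.2, ?_⟩
      have : i ≠ t - 1 := by
        intro h
        rw [h] at hi
        exact hi.2 hDt1
      omega
    rw [hJM]
    exact hTT Fs hGood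
  · -- case (iii)
    have hDt1 : Dset (t - 1) ≠ ⊥ := by
      intro hbot
      apply hJu
      intro a haJ
      have haD : rho a ∈ Dset (t - 1) := by
        refine (hDmem (t - 1) _).mpr ⟨a, ?_, rfl⟩
        have h0 : t - 1 - (t - 1) = 0 := by omega
        rw [h0, pow_zero, one_mul]
        exact haJ
      rw [hbot, Submodule.mem_bot] at haD
      obtain ⟨z, hz⟩ := hkerrho a haD
      exact (hUspan a).mpr ⟨z, hz⟩
    have ht1Fs : (t - 1) ∈ Fs := by
      rw [hFsmem]
      exact ⟨by omega, hDt1⟩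
    set G : Finset ℕ := Fs.erase (t - 1) with hGdef
    have hGood : ∀ i ∈ G, i < t ∧ Dset i ≠ ⊥ ∧ i ≤ t - 2 := by
      intro i hi
      rw [hGdef, Finset.mem_erase, hFsmem] at hi
      exact ⟨hi.2.1, hi.2.2, by omega⟩
    obtain ⟨hInB1, -, -⟩ := hmain (t - 1) (by omega) hDt1
    refine Or.inr (Or.inr (Or.inr ⟨hJtop, hJu, bfun (t - 1), -(gfun (t - 1)),
      Submodule.span Q (Wg '' ↑G), hInB1, hTT G hGood, ?_⟩))
    have hWt1 : lQ p m t iot Xp piQ (bfun (t - 1)) + U * (-(gfun (t - 1))) = Wg (t - 1) := by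
      rw [hWgdef]
      have h0 : t - 1 - (t - 1) = 0 := by omega
      have h1 : t - (t - 1) = 1 := by omega
      simp only [h0, h1, pow_zero, one_mul, pow_one, mul_neg]
      abel
    rw [hJM, hWt1]
    have hins : (↑Fs : Set ℕ) = insert (t - 1) (↑G : Set ℕ) := by
      rw [hGdef, ← Finset.coe_insert, Finset.insert_erase ht1Fs]
    rw [hins, Set.image_insert_eq, Submodule.span_insert]



end SkewPaper
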